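/- Let p be an odd prime, q ∈ ℂ_p with |1−q|_p < 1, and f : ℤ_p → ℂ_p uniformly differentiable. Let w ∈ ℂ_p with |1−w|_p < 1 and define μ^{(w)}_{f,−q}(a + p^n ℤ_p) = ∫_{a+p^n ℤ_p} w^ξ f(ξ) dμ_{−q}(ξ) (the fermionic p-adic q-integral restricted to the ball a + p^n ℤ_p). Then there exists a constant C > 0 such that for all n ≥ 0 and all a with 0 ≤ a < p^n: |[p^n]_{−q} μ^{(w)}_{f,−q}(a + p^n ℤ_p) − [p^{n+1}]_{−q} μ^{(w)}_{f,−q}(a + p^{n+1} ℤ_p)|_p ≤ C·p^{−n}. -/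

import Mathlib

open Filter Finset


open IsUltrametricDist in
private lemma wmsi_norm_add_eq_left {K : Type*} [NontriviallyNormedField K]
    [IsUltrametricDist K] {a b : K} (h : ‖b‖ < ‖a‖) : ‖a + b‖ = ‖a‖ := by
  rw [norm_add_eq_max_of_norm_ne_norm (x := a) (y := b) h.ne', max_eq_left h.le]

open IsUltrametricDist in
private lemma wmsi_norm_sub_le_max {K : Type*} [NontriviallyNormedField K]
    [IsUltrametricDist K] (a b : K) : ‖a - b‖ ≤ max ‖a‖ ‖b‖ := by
  rw [sub_eq_add_neg]
  simpa [norm_neg] using norm_add_le_max a (-b)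

open IsUltrametricDist in
private lemma wmsi_norm_pow_sub_one_le {K : Type*} [NontriviallyNormedField K]
    [IsUltrametricDist K] {y : K} (hy : ‖y‖ ≤ 1) (n : ℕ) :
    ‖y ^ n - 1‖ ≤ ‖y - 1‖ := by
  calc ‖y ^ n - 1‖ = ‖(∑ i ∈ range n, y ^ i) * (y - 1)‖ := by rw [geom_sum_mul]
    _ = ‖∑ i ∈ range n, y ^ i‖ * ‖y - 1‖ := norm_mul _ _
    _ ≤ 1 * ‖y - 1‖ := by
        refine mul_le_mul_of_nonneg_right ?_ (norm_nonneg _)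
        exact norm_sum_le_of_forall_le_of_nonneg zero_le_one fun i _ => by
          rw [norm_pow]; exact pow_le_one₀ (norm_nonneg _) hy
    _ = ‖y - 1‖ := one_mul _

open IsUltrametricDist in
private lemma wmsi_step {K : Type*} [NontriviallyNormedField K] [IsUltrametricDist K]
    {P : ℕ} {z : K} (hPK : ‖(P : K)‖ = (P : ℝ)⁻¹) (hz1 : ‖z‖ ≤ 1) :
    ‖z ^ P - 1‖ ≤ ‖z - 1‖ * max (P : ℝ)⁻¹ ‖z - 1‖ := by
  have hsum : (∑ i ∈ range P, z ^ i) = (∑ i ∈ range P, (z ^ i - 1)) + (P : K) := by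
    rw [Finset.sum_sub_distrib, Finset.sum_const, card_range, nsmul_eq_mul, mul_one]
    ring
  have h1 : ‖∑ i ∈ range P, z ^ i‖ ≤ max (P : ℝ)⁻¹ ‖z - 1‖ := by
    rw [hsum]
    refine (norm_add_le_max _ _).trans (max_le ?_ ?_)
    · exact (norm_sum_le_of_forall_le_of_nonneg (norm_nonneg _)
        fun i _ => wmsi_norm_pow_sub_one_le hz1 i).trans (le_max_right _ _)
    · rw [hPK]; exact le_max_left _ _
  calc ‖z ^ P - 1‖ = ‖(∑ i ∈ range P, z ^ i) * (z - 1)‖ := by rw [geom_sum_mul]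
    _ = ‖∑ i ∈ range P, z ^ i‖ * ‖z - 1‖ := norm_mul _ _
    _ ≤ max (P : ℝ)⁻¹ ‖z - 1‖ * ‖z - 1‖ := mul_le_mul_of_nonneg_right h1 (norm_nonneg _)
    _ = ‖z - 1‖ * max (P : ℝ)⁻¹ ‖z - 1‖ := mul_comm _ _

open IsUltrametricDist in
private lemma wmsi_rate {K : Type*} [NontriviallyNormedField K] [IsUltrametricDist K]
    {P : ℕ} (hP : 2 ≤ P) (hPK : ‖(P : K)‖ = (P : ℝ)⁻¹) {z : K} (hz : ‖z - 1‖ < 1) :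
    ∃ C : ℝ, 0 < C ∧ ∀ n : ℕ, ‖z ^ P ^ n - 1‖ ≤ C * ((P : ℝ)⁻¹) ^ n := by
  have hP1 : (1 : ℝ) < (P : ℝ) := by exact_mod_cast hP.trans_lt' one_lt_two
  have hP0 : (0 : ℝ) < (P : ℝ) := lt_trans one_pos hP1
  have hPinv0 : (0 : ℝ) < (P : ℝ)⁻¹ := by positivity
  have hPinv1 : (P : ℝ)⁻¹ < 1 := inv_lt_one_of_one_lt₀ hP1
  have hz1 : ‖z‖ ≤ 1 := by
    have h : z = 1 + (z - 1) := by ring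
    rw [h]
    exact (norm_add_le_max _ _).trans (max_le (by simp) (by simpa using hz.le))
  have hzn1 : ∀ n : ℕ, ‖z ^ P ^ n‖ ≤ 1 := fun n => by
    rw [norm_pow]; exact pow_le_one₀ (norm_nonneg z) hz1
  have he0 : ∀ n : ℕ, (0 : ℝ) ≤ ‖z ^ P ^ n - 1‖ := fun n => norm_nonneg _
  have hlt : ∀ n : ℕ, ‖z ^ P ^ n - 1‖ < 1 := fun n =>
    lt_of_le_of_lt (wmsi_norm_pow_sub_one_le hz1 _) hz
  have hstep : ∀ n : ℕ, ‖z ^ P ^ (n + 1) - 1‖ ≤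
      ‖z ^ P ^ n - 1‖ * max (P : ℝ)⁻¹ ‖z ^ P ^ n - 1‖ := by
    intro n
    have h := wmsi_step hPK (hzn1 n)
    rwa [← pow_mul, ← pow_succ] at h
  have hmono : ∀ n : ℕ, ‖z ^ P ^ (n + 1) - 1‖ ≤ ‖z ^ P ^ n - 1‖ := fun n =>
    (hstep n).trans (mul_le_of_le_one_right (he0 n) (max_le hPinv1.le (hlt n).le))
  have hle0 : ∀ n : ℕ, ‖z ^ P ^ n - 1‖ ≤ ‖z ^ P ^ 0 - 1‖ := by
    intro n
    induction n with
    | zero => exact le_rfl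
    | succ k ih => exact (hmono k).trans ih
  set ρ : ℝ := max (P : ℝ)⁻¹ ‖z ^ P ^ 0 - 1‖ with hρ
  have hρ0 : 0 ≤ ρ := le_trans hPinv0.le (le_max_left _ _)
  have hρ1 : ρ < 1 := max_lt hPinv1 (hlt 0)
  have hgeo : ∀ n : ℕ, ‖z ^ P ^ n - 1‖ ≤ ‖z ^ P ^ 0 - 1‖ * ρ ^ n := by
    intro n
    induction n with
    | zero => simp
    | succ k ih =>
      calc ‖z ^ P ^ (k + 1) - 1‖ ≤ ‖z ^ P ^ k - 1‖ * max (P : ℝ)⁻¹ ‖z ^ P ^ k - 1‖ := hstep k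
        _ ≤ (‖z ^ P ^ 0 - 1‖ * ρ ^ k) * ρ := by
            refine mul_le_mul ih (max_le (le_max_left _ _)
              ((hle0 k).trans (le_max_right _ _))) (le_trans hPinv0.le (le_max_left _ _)) ?_
            exact mul_nonneg (he0 0) (pow_nonneg hρ0 k)
        _ = ‖z ^ P ^ 0 - 1‖ * ρ ^ (k + 1) := by ring
  have htend : Tendsto (fun n : ℕ => ‖z ^ P ^ 0 - 1‖ * ρ ^ n) atTop (nhds 0) := by
    have h := (tendsto_pow_atTop_nhds_zero_of_lt_one hρ0 hρ1).const_mul ‖z ^ P ^ 0 - 1‖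
    rwa [mul_zero] at h
  obtain ⟨N, hN⟩ := (htend.eventually_lt_const hPinv0).exists
  have hNle : ‖z ^ P ^ N - 1‖ ≤ (P : ℝ)⁻¹ := (hgeo N).trans hN.le
  have hNk : ∀ k : ℕ, ‖z ^ P ^ (N + k) - 1‖ ≤ (P : ℝ)⁻¹ * ((P : ℝ)⁻¹) ^ k := by
    intro k
    induction k with
    | zero => simpa using hNle
    | succ k ih =>
      have hpk1 : ((P : ℝ)⁻¹) ^ k ≤ 1 := pow_le_one₀ hPinv0.le hPinv1.le
      have hek : ‖z ^ P ^ (N + k) - 1‖ ≤ (P : ℝ)⁻¹ := ih.trans (by nlinarith)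
      calc ‖z ^ P ^ (N + k + 1) - 1‖
          ≤ ‖z ^ P ^ (N + k) - 1‖ * max (P : ℝ)⁻¹ ‖z ^ P ^ (N + k) - 1‖ := hstep (N + k)
        _ ≤ ((P : ℝ)⁻¹ * ((P : ℝ)⁻¹) ^ k) * (P : ℝ)⁻¹ := by
            refine mul_le_mul ih (max_le le_rfl hek)
              (le_trans hPinv0.le (le_max_left _ _)) (by positivity)
        _ = (P : ℝ)⁻¹ * ((P : ℝ)⁻¹) ^ (k + 1) := by ring
  refine ⟨(P : ℝ) ^ N, by positivity, fun n => ?_⟩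
  rcases le_or_gt N n with h | h
  · obtain ⟨k, rfl⟩ : ∃ k, n = N + k := ⟨n - N, by omega⟩
    have hPP : (P : ℝ) ^ N * ((P : ℝ)⁻¹) ^ (N + k) = ((P : ℝ)⁻¹) ^ k := by
      rw [pow_add, ← mul_assoc, ← mul_pow, mul_inv_cancel₀ hP0.ne', one_pow, one_mul]
    rw [hPP]
    have hpk0 : (0 : ℝ) ≤ ((P : ℝ)⁻¹) ^ k := by positivity
    exact (hNk k).trans (by nlinarith)
  · have h1 : (P : ℝ) ^ N * ((P : ℝ)⁻¹) ^ n = (P : ℝ) ^ (N - n) := by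
      have hNn : (P : ℝ) ^ N = (P : ℝ) ^ (N - n) * (P : ℝ) ^ n := by
        rw [← pow_add]; congr 1; omega
      rw [hNn, mul_assoc, inv_pow, mul_inv_cancel₀ (by positivity), mul_one]
    rw [h1]
    exact (hlt n).le.trans (one_le_pow₀ hP1.le)

private lemma wmsi_sum_range_mul {M : Type*} [AddCommMonoid M] (g : ℕ → M) (b : ℕ) :
    ∀ nn : ℕ, ∑ i ∈ range (b * nn), g i = ∑ j ∈ range nn, ∑ r ∈ range b, g (b * j + r) := by
  intro nn
  induction nn with
  | zero => simp
  | succ k ih => rw [Nat.mul_succ, Finset.sum_range_add, ih, Finset.sum_range_succ]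

/-- the weighted measure `μ^{(w)}_{f,-q}(a + pⁿℤ_p)`, defined as the limit of
the Riemann sums of the fermionic `p`-adic `q`-integral of `w^ξ f(ξ)` over the ball
`a + pⁿℤ_p`, is a strongly weighted measure: there is `C > 0` with
`‖[pⁿ]_{-q} μ(a + pⁿℤ_p) - [pⁿ⁺¹]_{-q} μ(a + pⁿ⁺¹ℤ_p)‖ ≤ C·p⁻ⁿ` for all `n` and
`0 ≤ a < pⁿ`. Here `[x]_{-q} = (1 - (-q)ˣ)/(1 + q)`. -/
theorem weighted_measure_strongly_invariant (p : ℕ) [Fact p.Prime] (hodd : p ≠ 2)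
    (K : Type*) [NontriviallyNormedField K] [IsUltrametricDist K]
    (hpK : ‖(p : K)‖ = (p : ℝ)⁻¹)
    (q w : K) (hq : ‖1 - q‖ < 1) (hw : ‖1 - w‖ < 1)
    (f : ℤ_[p] → K) (hf : ∃ M : ℝ, ∀ x m : ℤ_[p], ‖f (x + m) - f x‖ ≤ M * ‖m‖)
    (μ : ℕ → ℕ → K)
    (hμ : ∀ n a : ℕ, Filter.Tendsto (fun m : ℕ =>
        (1 / ((1 - (-q) ^ (p ^ m)) / (1 + q))) *
          ∑ i ∈ range (p ^ (m - n)),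
            w ^ (a + i * p ^ n) * f ((a + i * p ^ n : ℕ) : ℤ_[p]) *
              (-q) ^ (a + i * p ^ n)) atTop (nhds (μ n a))) :
    ∃ C : ℝ, 0 < C ∧ ∀ n a : ℕ, a < p ^ n →
      ‖((1 - (-q) ^ (p ^ n)) / (1 + q)) * μ n a -
          ((1 - (-q) ^ (p ^ (n + 1))) / (1 + q)) * μ (n + 1) a‖ ≤
        C * (p : ℝ) ^ (-(n : ℤ)) := by
  have hP : p.Prime := Fact.out
  have hp2 : 2 ≤ p := hP.two_le
  have hp1R : (1 : ℝ) < (p : ℝ) := by exact_mod_cast hp2.trans_lt' one_lt_two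
  have hPinv0 : (0 : ℝ) < (p : ℝ)⁻¹ := by positivity
  have hPinv1 : (p : ℝ)⁻¹ < 1 := inv_lt_one_of_one_lt₀ hp1R
  obtain ⟨M₀, hf0⟩ := hf
  set M : ℝ := max M₀ 1 with hMdef
  have hM1 : (1 : ℝ) ≤ M := le_max_right _ _
  have hM0 : (0 : ℝ) < M := lt_of_lt_of_le one_pos hM1
  have hf' : ∀ x m : ℤ_[p], ‖f (x + m) - f x‖ ≤ M * ‖m‖ := fun x m =>
    (hf0 x m).trans (mul_le_mul_of_nonneg_right (le_max_left _ _) (norm_nonneg _))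
  set B : ℝ := ‖f 0‖ + M with hBdef
  have hB0 : 0 < B := by positivity
  have hB : ∀ y : ℤ_[p], ‖f y‖ ≤ B := by
    intro y
    have h := hf' 0 y
    rw [zero_add] at h
    have h2 : M * ‖y‖ ≤ M := mul_le_of_le_one_right hM0.le (PadicInt.norm_le_one y)
    calc ‖f y‖ = ‖f 0 + (f y - f 0)‖ := by congr 1; ring
      _ ≤ ‖f 0‖ + ‖f y - f 0‖ := norm_add_le _ _
      _ ≤ ‖f 0‖ + M := by rw [hBdef] at *; linarith
  have hq' : ‖q - 1‖ < 1 := by rwa [norm_sub_rev]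
  have hw' : ‖w - 1‖ < 1 := by rwa [norm_sub_rev]
  have hunit : ∀ z : K, ‖z - 1‖ < 1 → ‖z‖ = 1 := by
    intro z hz
    have h : ‖(1 : K) + (z - 1)‖ = ‖(1 : K)‖ := wmsi_norm_add_eq_left (by simpa using hz)
    simpa using h
  have hq1 : ‖q‖ = 1 := hunit q hq'
  have hw1 : ‖w‖ = 1 := hunit w hw'
  have hv' : ‖w * q - 1‖ < 1 := by
    have h : w * q - 1 = w * (q - 1) + (w - 1) := by ring
    rw [h]
    refine lt_of_le_of_lt (IsUltrametricDist.norm_add_le_max _ _) (max_lt ?_ hw')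
    calc ‖w * (q - 1)‖ ≤ ‖w‖ * ‖q - 1‖ := norm_mul_le _ _
      _ = ‖q - 1‖ := by rw [hw1, one_mul]
      _ < 1 := hq'
  have hv1 : ‖w * q‖ = 1 := hunit _ hv'
  have hoddp : Odd p := hP.odd_of_ne_two hodd
  have h2K : ‖(2 : K)‖ = 1 := by
    obtain ⟨k, hk⟩ := hoddp
    have hcast : (2 : K) * (k : K) = (p : K) - 1 := by rw [hk]; push_cast; ring
    have hnormp1 : ‖(p : K) - 1‖ = 1 := by
      have h : (p : K) - 1 = (-1 : K) + (p : K) := by ring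
      have hlt : ‖(p : K)‖ < ‖(-1 : K)‖ := by
        rw [norm_neg, norm_one, hpK]; exact inv_lt_one_of_one_lt₀ hp1R
      rw [h, wmsi_norm_add_eq_left hlt, norm_neg, norm_one]
    have h2le : ‖(2 : K)‖ ≤ 1 := by
      have := IsUltrametricDist.norm_natCast_le_one K 2
      simpa using this
    have hge : (1 : ℝ) ≤ ‖(2 : K)‖ := by
      have hkle : ‖(k : K)‖ ≤ 1 := IsUltrametricDist.norm_natCast_le_one K k
      calc (1 : ℝ) = ‖(2 : K) * (k : K)‖ := by rw [hcast, hnormp1]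
        _ ≤ ‖(2 : K)‖ * ‖(k : K)‖ := norm_mul_le _ _
        _ ≤ ‖(2 : K)‖ * 1 := mul_le_mul_of_nonneg_left hkle (norm_nonneg _)
        _ = ‖(2 : K)‖ := mul_one _
    linarith
  have honeplus : ∀ z : K, ‖z - 1‖ < 1 → ‖1 + z‖ = 1 := by
    intro z hz
    have h : (1 : K) + z = 2 + (z - 1) := by ring
    rw [h, wmsi_norm_add_eq_left (by rw [h2K]; exact hz), h2K]
  have hqknorm : ∀ k : ℕ, ‖q ^ p ^ k - 1‖ < 1 := fun k =>
    lt_of_le_of_lt (wmsi_norm_pow_sub_one_le hq1.le _) hq'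
  have hnegq : ∀ k : ℕ, (-q) ^ p ^ k = -(q ^ p ^ k) := fun k => (hoddp.pow).neg_pow q
  have h1qnorm : ‖1 + q‖ = 1 := honeplus q hq'
  have h1q0 : (1 + q) ≠ 0 := by
    intro h; rw [h] at h1qnorm; simp at h1qnorm
  have hLnorm : ∀ k : ℕ, ‖(1 - (-q) ^ p ^ k) / (1 + q)‖ = 1 := by
    intro k
    rw [hnegq k, sub_neg_eq_add, norm_div, honeplus _ (hqknorm k), h1qnorm]
    norm_num
  obtain ⟨Cq, hCq0, hCq⟩ := wmsi_rate hp2 hpK hq'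
  obtain ⟨Cv, hCv0, hCv⟩ := wmsi_rate hp2 hpK hv'
  set C : ℝ := max M (max Cq Cv * B) with hCdef
  have hC0 : 0 < C := lt_of_lt_of_le hM0 (le_max_left _ _)
  refine ⟨C, hC0, ?_⟩
  intro n a ha
  have hzp : (p : ℝ) ^ (-(n : ℤ)) = ((p : ℝ)⁻¹) ^ n := by
    rw [zpow_neg, zpow_natCast, inv_pow]
  rw [hzp]
  set u : K := (w * q) ^ p ^ n with hu
  have hu1 : ‖u - 1‖ < 1 := lt_of_le_of_lt (wmsi_norm_pow_sub_one_le hv1.le _) hv'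
  have h1u : ‖1 + u‖ = 1 := honeplus u hu1
  have h1u0 : (1 + u) ≠ 0 := by
    intro h; rw [h] at h1u; simp at h1u
  set Aq : K := (w * -q) ^ p ^ n with hAqdef
  have hAu : Aq = -u := by
    rw [hAqdef, hu, show w * -q = -(w * q) by ring, (hoddp.pow).neg_pow]
  have hAnorm : ‖Aq‖ = 1 := by
    rw [hAu, norm_neg, hu, norm_pow, hv1, one_pow]
  have hgeom : (∑ r ∈ range p, Aq ^ r) * (1 + u) = 1 + u ^ p := by
    rw [hAu]
    have h := geom_sum_mul (-u) p
    rw [hoddp.neg_pow u] at h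
    linear_combination -h
  set Ln : K := (1 - (-q) ^ p ^ n) / (1 + q) with hLndef
  set Ls : K := (1 - (-q) ^ p ^ (n + 1)) / (1 + q) with hLsdef
  have hLn1 : ‖Ln‖ = 1 := by rw [hLndef]; exact hLnorm n
  have hEn : Ln * (∑ r ∈ range p, Aq ^ r) - Ls =
      ((1 + q ^ p ^ n) * (1 + (w * q) ^ p ^ (n + 1)) - (1 + u) * (1 + q ^ p ^ (n + 1)))
        / ((1 + q) * (1 + u)) := by
    have hup : u ^ p = (w * q) ^ p ^ (n + 1) := by rw [hu, ← pow_mul, ← pow_succ]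
    have hgs : (∑ r ∈ range p, Aq ^ r) = (1 + u ^ p) / (1 + u) := by
      rw [eq_div_iff h1u0]; exact hgeom
    rw [hgs, hup, hLndef, hLsdef, hnegq n, hnegq (n + 1), sub_neg_eq_add, sub_neg_eq_add]
    field_simp
  have hC2 : (0 : ℝ) ≤ max Cq Cv * ((p : ℝ)⁻¹) ^ n := by positivity
  have hqbound : ∀ k : ℕ, n ≤ k → ‖q ^ p ^ k - 1‖ ≤ max Cq Cv * ((p : ℝ)⁻¹) ^ n := by
    intro k hk
    refine (hCq k).trans ?_
    have h1 : ((p : ℝ)⁻¹) ^ k ≤ ((p : ℝ)⁻¹) ^ n := pow_le_pow_of_le_one hPinv0.le hPinv1.le hk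
    have h2 : Cq * ((p : ℝ)⁻¹) ^ k ≤ Cq * ((p : ℝ)⁻¹) ^ n := mul_le_mul_of_nonneg_left h1 hCq0.le
    exact h2.trans (mul_le_mul_of_nonneg_right (le_max_left _ _) (by positivity))
  have hvbound : ∀ k : ℕ, n ≤ k → ‖(w * q) ^ p ^ k - 1‖ ≤ max Cq Cv * ((p : ℝ)⁻¹) ^ n := by
    intro k hk
    refine (hCv k).trans ?_
    have h1 : ((p : ℝ)⁻¹) ^ k ≤ ((p : ℝ)⁻¹) ^ n := pow_le_pow_of_le_one hPinv0.le hPinv1.le hk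
    have h2 : Cv * ((p : ℝ)⁻¹) ^ k ≤ Cv * ((p : ℝ)⁻¹) ^ n := mul_le_mul_of_nonneg_left h1 hCv0.le
    exact h2.trans (mul_le_mul_of_nonneg_right (le_max_right _ _) (by positivity))
  have hmul2 : ∀ t : K, ‖t‖ ≤ max Cq Cv * ((p : ℝ)⁻¹) ^ n →
      ‖2 * t‖ ≤ max Cq Cv * ((p : ℝ)⁻¹) ^ n := by
    intro t ht
    refine (norm_mul_le _ _).trans ?_
    calc ‖(2 : K)‖ * ‖t‖ ≤ 1 * (max Cq Cv * ((p : ℝ)⁻¹) ^ n) :=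
          mul_le_mul (le_of_eq h2K) ht (norm_nonneg t) zero_le_one
      _ = max Cq Cv * ((p : ℝ)⁻¹) ^ n := one_mul _
  have hmulC : ∀ s t : K, ‖s‖ ≤ max Cq Cv * ((p : ℝ)⁻¹) ^ n → ‖t‖ ≤ 1 →
      ‖s * t‖ ≤ max Cq Cv * ((p : ℝ)⁻¹) ^ n := by
    intro s t hs ht
    refine (norm_mul_le _ _).trans ?_
    calc ‖s‖ * ‖t‖ ≤ (max Cq Cv * ((p : ℝ)⁻¹) ^ n) * 1 :=
          mul_le_mul hs ht (norm_nonneg t) hC2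
      _ = max Cq Cv * ((p : ℝ)⁻¹) ^ n := mul_one _
  have hEnorm : ‖Ln * (∑ r ∈ range p, Aq ^ r) - Ls‖ ≤ max Cq Cv * ((p : ℝ)⁻¹) ^ n := by
    rw [hEn, norm_div, norm_mul, h1qnorm, h1u, mul_one, div_one]
    have hnum : ∀ A B' Cc D : K, (1 + A) * (1 + B') - (1 + Cc) * (1 + D)
        = (2 * (A - 1) + 2 * (B' - 1) + (A - 1) * (B' - 1))
          - (2 * (Cc - 1) + 2 * (D - 1) + (Cc - 1) * (D - 1)) := by
      intros; ring
    rw [hnum]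
    have ha1 := hqbound n le_rfl
    have hb1 := hvbound (n + 1) (Nat.le_succ n)
    have hc1 : ‖u - 1‖ ≤ max Cq Cv * ((p : ℝ)⁻¹) ^ n := by rw [hu]; exact hvbound n le_rfl
    have hd1 := hqbound (n + 1) (Nat.le_succ n)
    have hb1' : ‖(w * q) ^ p ^ (n + 1) - 1‖ ≤ 1 :=
      (wmsi_norm_pow_sub_one_le hv1.le _).trans hv'.le
    have hd1' : ‖q ^ p ^ (n + 1) - 1‖ ≤ 1 := (hqknorm (n + 1)).le
    refine (wmsi_norm_sub_le_max _ _).trans (max_le ?_ ?_)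
    · exact (IsUltrametricDist.norm_add_le_max _ _).trans (max_le
        ((IsUltrametricDist.norm_add_le_max _ _).trans (max_le (hmul2 _ ha1) (hmul2 _ hb1)))
        (hmulC _ _ ha1 hb1'))
    · exact (IsUltrametricDist.norm_add_le_max _ _).trans (max_le
        ((IsUltrametricDist.norm_add_le_max _ _).trans (max_le (hmul2 _ hc1) (hmul2 _ hd1)))
        (hmulC _ _ hc1 hd1'))
  have hcore : ∀ x : ℕ,
      ‖Ln * (∑ r ∈ range p, w ^ (x + r * p ^ n) * f ((x + r * p ^ n : ℕ) : ℤ_[p]) *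
          (-q) ^ (x + r * p ^ n)) - Ls * (w ^ x * f (x : ℤ_[p]) * (-q) ^ x)‖
        ≤ C * ((p : ℝ)⁻¹) ^ n := by
    intro x
    have hsummand : ∀ r : ℕ,
        w ^ (x + r * p ^ n) * f ((x + r * p ^ n : ℕ) : ℤ_[p]) * (-q) ^ (x + r * p ^ n)
          = (w ^ x * (-q) ^ x) *
            (Aq ^ r * f ((x : ℤ_[p]) + (r : ℤ_[p]) * ((p : ℤ_[p])) ^ n)) := by
      intro r
      have hc : ((x + r * p ^ n : ℕ) : ℤ_[p])
          = (x : ℤ_[p]) + (r : ℤ_[p]) * ((p : ℤ_[p])) ^ n := by push_cast; ring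
      have e1 : ∀ z : K, z ^ (x + r * p ^ n) = z ^ x * (z ^ p ^ n) ^ r := by
        intro z; rw [pow_add, ← pow_mul, mul_comm (p ^ n) r]
      rw [hc, e1 w, e1 (-q), hAqdef, mul_pow, mul_pow]
      ring
    have hsplit : ∑ r ∈ range p, Aq ^ r *
          (f ((x : ℤ_[p]) + (r : ℤ_[p]) * ((p : ℤ_[p])) ^ n) - f (x : ℤ_[p]))
        = (∑ r ∈ range p, Aq ^ r * f ((x : ℤ_[p]) + (r : ℤ_[p]) * ((p : ℤ_[p])) ^ n))
          - (∑ r ∈ range p, Aq ^ r) * f (x : ℤ_[p]) := by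
      rw [Finset.sum_mul, ← Finset.sum_sub_distrib]
      exact Finset.sum_congr rfl fun r _ => by ring
    have hid : Ln * (∑ r ∈ range p, w ^ (x + r * p ^ n) * f ((x + r * p ^ n : ℕ) : ℤ_[p]) *
          (-q) ^ (x + r * p ^ n)) - Ls * (w ^ x * f (x : ℤ_[p]) * (-q) ^ x)
        = (w ^ x * (-q) ^ x) *
            (Ln * (∑ r ∈ range p, Aq ^ r *
              (f ((x : ℤ_[p]) + (r : ℤ_[p]) * ((p : ℤ_[p])) ^ n) - f (x : ℤ_[p])))
              + (Ln * (∑ r ∈ range p, Aq ^ r) - Ls) * f (x : ℤ_[p])) := by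
      simp only [hsummand]
      rw [← Finset.mul_sum, hsplit]
      ring
    rw [hid, norm_mul]
    have hwx : ‖w ^ x * (-q) ^ x‖ = 1 := by
      rw [norm_mul, norm_pow, norm_pow, norm_neg, hw1, hq1, one_pow, one_mul]
    rw [hwx, one_mul]
    refine (IsUltrametricDist.norm_add_le_max _ _).trans (max_le ?_ ?_)
    · rw [norm_mul, hLn1, one_mul]
      have hterm : ∀ r ∈ range p,
          ‖Aq ^ r * (f ((x : ℤ_[p]) + (r : ℤ_[p]) * ((p : ℤ_[p])) ^ n) - f (x : ℤ_[p]))‖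
            ≤ M * ((p : ℝ)⁻¹) ^ n := by
        intro r _
        have hsmall : ‖(r : ℤ_[p]) * ((p : ℤ_[p])) ^ n‖ ≤ ((p : ℝ)⁻¹) ^ n := by
          refine (norm_mul_le _ _).trans ?_
          have h1 : ‖((p : ℤ_[p])) ^ n‖ = ((p : ℝ)⁻¹) ^ n := by
            rw [PadicInt.norm_p_pow, zpow_neg, zpow_natCast, inv_pow]
          rw [h1]
          exact mul_le_of_le_one_left (by positivity) (PadicInt.norm_le_one _)
        have hFr : ‖f ((x : ℤ_[p]) + (r : ℤ_[p]) * ((p : ℤ_[p])) ^ n) - f (x : ℤ_[p])‖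
            ≤ M * ((p : ℝ)⁻¹) ^ n :=
          (hf' (x : ℤ_[p]) ((r : ℤ_[p]) * ((p : ℤ_[p])) ^ n)).trans
            (mul_le_mul_of_nonneg_left hsmall hM0.le)
        calc ‖Aq ^ r * (f ((x : ℤ_[p]) + (r : ℤ_[p]) * ((p : ℤ_[p])) ^ n) - f (x : ℤ_[p]))‖
            ≤ ‖Aq ^ r‖ * ‖f ((x : ℤ_[p]) + (r : ℤ_[p]) * ((p : ℤ_[p])) ^ n) - f (x : ℤ_[p])‖ :=
              norm_mul_le _ _
          _ ≤ 1 * (M * ((p : ℝ)⁻¹) ^ n) := by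
              refine mul_le_mul ?_ hFr (norm_nonneg _) zero_le_one
              rw [norm_pow, hAnorm, one_pow]
          _ = M * ((p : ℝ)⁻¹) ^ n := one_mul _
      refine (IsUltrametricDist.norm_sum_le_of_forall_le_of_nonneg (by positivity) hterm).trans ?_
      exact mul_le_mul_of_nonneg_right (le_max_left _ _) (by positivity)
    · rw [norm_mul]
      calc ‖Ln * (∑ r ∈ range p, Aq ^ r) - Ls‖ * ‖f (x : ℤ_[p])‖
          ≤ (max Cq Cv * ((p : ℝ)⁻¹) ^ n) * B :=
            mul_le_mul hEnorm (hB _) (norm_nonneg _) hC2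
        _ = (max Cq Cv * B) * ((p : ℝ)⁻¹) ^ n := by ring
        _ ≤ C * ((p : ℝ)⁻¹) ^ n :=
            mul_le_mul_of_nonneg_right (le_max_right _ _) (by positivity)
  have h1 := hμ n a
  have h2 := hμ (n + 1) a
  have hten := ((h1.const_mul Ln).sub (h2.const_mul Ls)).norm
  refine le_of_tendsto hten ?_
  filter_upwards [eventually_ge_atTop (n + 1)] with m hm
  set Lm : K := (1 - (-q) ^ p ^ m) / (1 + q) with hLmdef
  have hLm1 : ‖1 / Lm‖ = 1 := by
    rw [norm_div, norm_one, hLmdef, hLnorm m]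
    norm_num
  rw [show ∀ X Y : K, Ln * (1 / Lm * X) - Ls * (1 / Lm * Y)
      = (1 / Lm) * (Ln * X - Ls * Y) from fun _ _ => by ring]
  rw [norm_mul, hLm1, one_mul]
  have hmsub : m - n = (m - (n + 1)) + 1 := by omega
  have hXr : ∑ i ∈ range (p ^ (m - n)),
        w ^ (a + i * p ^ n) * f ((a + i * p ^ n : ℕ) : ℤ_[p]) * (-q) ^ (a + i * p ^ n)
      = ∑ j ∈ range (p ^ (m - (n + 1))), ∑ r ∈ range p,
        w ^ ((a + j * p ^ (n + 1)) + r * p ^ n) *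
          f (((a + j * p ^ (n + 1)) + r * p ^ n : ℕ) : ℤ_[p]) *
          (-q) ^ ((a + j * p ^ (n + 1)) + r * p ^ n) := by
    rw [hmsub, pow_succ']
    rw [wmsi_sum_range_mul]
    refine Finset.sum_congr rfl fun j _ => Finset.sum_congr rfl fun r _ => ?_
    have harith : a + (p * j + r) * p ^ n = (a + j * p ^ (n + 1)) + r * p ^ n := by ring
    rw [harith]
  rw [hXr, Finset.mul_sum, Finset.mul_sum, ← Finset.sum_sub_distrib]
  exact IsUltrametricDist.norm_sum_le_of_forall_le_of_nonneg
    (mul_nonneg hC0.le (by positivity)) fun j _ => hcore (a + j * p ^ (n + 1))
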